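/- Let 0 < p < 1/2. Then the family {C₁, C₂, C₃} is proximal: there exist n ≥ 1, a word w ∈ {1,2,3}ⁿ, and a real number λ > 0 such that λ is a root of the characteristic polynomial of C_w of multiplicity one and every other complex root μ of the characteristic polynomial satisfies |μ| < λ. -/

import Mathlib

open Matrix MeasureTheory Filter
open scoped ENNReal

noncomputable section

abbrev E3 : Type := EuclideanSpace ℝ (Fin 3)
abbrev Mat3 : Type := Matrix (Fin 3) (Fin 3) ℝ

/-- The action of a matrix on Euclidean 3-space. -/
noncomputable def matApply (A : Mat3) (x : E3) : E3 := Matrix.toEuclideanCLM (𝕜 := ℝ) A x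

/-- The largest singular value `α₁(A) = ‖A‖` (Euclidean operator norm). -/
noncomputable def sv1 (A : Mat3) : ℝ := ‖Matrix.toEuclideanCLM (𝕜 := ℝ) A‖

/-- The smallest singular value `α₃(A) = ‖A⁻¹‖⁻¹`. -/
noncomputable def sv3 (A : Mat3) : ℝ := (‖Matrix.toEuclideanCLM (𝕜 := ℝ) A⁻¹‖)⁻¹

/-- The middle singular value `α₂(A) = |det A| / (α₁(A) α₃(A))`. -/
noncomputable def sv2 (A : Mat3) : ℝ := |A.det| / (sv1 A * sv3 A)

/-- Falconer's singular value function `φ^s(A)`. -/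
noncomputable def svf (s : ℝ) (A : Mat3) : ℝ :=
  if s ≤ 1 then (sv1 A) ^ s
  else if s ≤ 2 then sv1 A * (sv2 A) ^ (s - 1)
  else if s ≤ 3 then sv1 A * sv2 A * (sv3 A) ^ (s - 2)
  else (sv1 A * sv2 A * sv3 A) ^ (s / 3)

/-- The three matrices `C₁, C₂, C₃` (with 0-based indexing). -/
def Cmat (p : ℝ) : Fin 3 → Mat3 :=
  ![!![1 - 2*p, -p, -p; 0, p, 0; 0, 0, p],
    !![p, 0, 0; -p, 1 - 2*p, -p; 0, 0, p],
    !![p, 0, 0; 0, p, 0; -p, -p, 1 - 2*p]]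

/-- The product `C_w = C_{j₁} ⋯ C_{jₙ}` along a word `w = (j₁, …, jₙ)`. -/
noncomputable def Cword (p : ℝ) {n : ℕ} (w : Fin n → Fin 3) : Mat3 :=
  ((List.ofFn w).map (Cmat p)).prod

/-- standard basis vectors of `E3` -/
noncomputable def eVec (i : Fin 3) : E3 := EuclideanSpace.single i 1

/-- The affine map `G_i(x) = C_i x + 2p·e_i`. -/
noncomputable def Gmap (p : ℝ) (i : Fin 3) (x : E3) : E3 :=
  matApply (Cmat p i) x + (2 * p) • eVec i

/-- The composition `G_w = G_{j₁} ∘ ⋯ ∘ G_{jₙ}` along a word `w = (j₁, …, jₙ)`. -/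
noncomputable def Gword (p : ℝ) {n : ℕ} (w : Fin n → Fin 3) : E3 → E3 :=
  ((List.ofFn w).map (Gmap p)).foldr (· ∘ ·) id

/-- Summability of the double series `Σ_{n=1}^∞ Σ_{w ∈ {1,2,3}ⁿ} φ^s(C_w)`
(all terms are nonnegative, so summability is equivalent to finiteness of the sum). -/
def seriesSummable (p s : ℝ) : Prop :=
  Summable (fun x : Σ n : ℕ, (Fin (n+1) → Fin 3) => svf s (Cword p x.2))

/-- The affinity dimension `s₀ = inf{s > 0 : Σ_n Σ_w φ^s(C_w) < ∞}`. -/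
noncomputable def s0 (p : ℝ) : ℝ := sInf {s : ℝ | 0 < s ∧ seriesSummable p s}

/-- The minimal number of balls of radius `δ` needed to cover `A`. -/
noncomputable def coverNum (A : Set E3) (δ : ℝ) : ℕ :=
  sInf {n : ℕ | ∃ t : Finset E3, t.card = n ∧ A ⊆ ⋃ x ∈ t, Metric.ball x δ}

/-- The upper box-counting dimension `limsup_{δ→0⁺} log N_δ(A) / (−log δ)`. -/
noncomputable def upperBoxDim (A : Set E3) : ℝ :=
  Filter.limsup (fun δ : ℝ => Real.log (coverNum A δ) / (-Real.log δ))
    (nhdsWithin 0 (Set.Ioi 0))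

/-- The vector `(1,1,1)`. -/
noncomputable def onesVec : E3 := (WithLp.equiv 2 (Fin 3 → ℝ)).symm ![1, 1, 1]

/-- Orthogonal projection of `ℝ³` onto the plane `V = {x : x₁ + x₂ + x₃ = 0}`. -/
noncomputable def projV (x : E3) : E3 := x - (((x 0) + (x 1) + (x 2)) / 3) • onesVec

/-- The vector `(a,b,c)` in `E3`. -/
noncomputable def vec3 (a b c : ℝ) : E3 := (WithLp.equiv 2 (Fin 3 → ℝ)).symm ![a, b, c]

/-- The triangle `T₀ = conv{e₁, e₂, e₃}`. -/
noncomputable def T0set : Set E3 := convexHull ℝ {eVec 0, eVec 1, eVec 2}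

/-- The standard tetrahedron `W = conv{0, e₁, e₂, e₃}`. -/
noncomputable def Wset : Set E3 := convexHull ℝ {0, eVec 0, eVec 1, eVec 2}

/-- The triangle `T_ε = conv{(1−2ε,ε,ε), (ε,1−2ε,ε), (ε,ε,1−2ε)}`. -/
noncomputable def Ttri (ε : ℝ) : Set E3 :=
  convexHull ℝ {vec3 (1 - 2*ε) ε ε, vec3 ε (1 - 2*ε) ε, vec3 ε ε (1 - 2*ε)}

set_option maxHeartbeats 2000000 in
/-- Lemma (the family `{C₁, C₂, C₃}` is proximal). -/
theorem Cmat_proximal (p : ℝ) (hp0 : 0 < p) (hp1 : p < 1/2) :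
    ∃ (n : ℕ) (w : Fin (n+1) → Fin 3) (lam : ℝ), 0 < lam ∧
      (((Cword p w).charpoly.map (algebraMap ℝ ℂ)).rootMultiplicity (lam : ℂ) = 1) ∧
      (∀ μ : ℂ, ((Cword p w).charpoly.map (algebraMap ℝ ℂ)).IsRoot μ → μ ≠ (lam : ℂ) →
        ‖μ‖ < lam) := by
  classical
  set a : ℝ := 1 - 2*p with ha
  have ha0 : 0 < a := by simp only [ha]; linarith
  set s : ℝ := Real.sqrt (4*a*p + p^2) with hs
  have hDpos : 0 < 4*a*p + p^2 := by positivity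
  have hs0 : 0 < s := Real.sqrt_pos.mpr hDpos
  have hs2 : s^2 = 4*a*p + p^2 := Real.sq_sqrt hDpos.le
  have hslt : s < 2*a + p := by
    rw [hs, Real.sqrt_lt' (by linarith)]
    nlinarith [sq_nonneg a]
  set lam : ℝ := (2*a*p + p^2 + p*s)/2 with hlam
  set mu : ℝ := (2*a*p + p^2 - p*s)/2 with hmu
  have hlampos : 0 < lam := by
    have : 0 < p * s := by positivity
    rw [hlam]; nlinarith
  have hmupos : 0 < mu := by
    have h1 : p * s < p * (2*a + p) := by
      exact mul_lt_mul_of_pos_left hslt hp0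
    rw [hmu]; nlinarith
  have hmul : mu < lam := by
    have : 0 < p * s := by positivity
    rw [hlam, hmu]; linarith
  have hp2l : p^2 < lam := by
    rw [hlam]
    rcases le_or_gt p (2*a) with h | h
    · nlinarith
    · have h2 : p - 2*a < s := by
        nlinarith [sq_nonneg (s - (p - 2*a)), hs0]
      nlinarith
  have hsum : lam + mu = 2*a*p + p^2 := by rw [hlam, hmu]; ring
  have hprod : lam * mu = a^2 * p^2 := by
    rw [hlam, hmu]; nlinarith [hs2]
  have hM : Cword p ![0, 1] =
      !![a*p + p^2, -(a*p), 0; -p^2, a*p, -p^2; 0, 0, p^2] := by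
    show ((List.ofFn ![(0 : Fin 3), 1]).map (Cmat p)).prod = _
    simp only [List.ofFn_succ, Fin.isValue, Matrix.cons_val_zero, Matrix.cons_val_one,
      Matrix.head_cons, List.ofFn_zero, List.map_cons, List.map_nil, List.prod_cons,
      List.prod_nil, mul_one]
    show Cmat p 0 * Cmat p 1 = _
    simp only [Cmat, Matrix.cons_val_zero, Matrix.cons_val_one, Matrix.head_cons]
    ext i j
    fin_cases i <;> fin_cases j <;>
      simp [Matrix.mul_apply, Fin.sum_univ_three] <;> ring
  have h01 : (0 : Fin 3) ≠ 1 := by decide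
  have h02 : (0 : Fin 3) ≠ 2 := by decide
  have h10 : (1 : Fin 3) ≠ 0 := by decide
  have h12 : (1 : Fin 3) ≠ 2 := by decide
  have h20 : (2 : Fin 3) ≠ 0 := by decide
  have h21 : (2 : Fin 3) ≠ 1 := by decide
  have hfac : (Cword p ![0, 1]).charpoly =
      (Polynomial.X - Polynomial.C lam) * (Polynomial.X - Polynomial.C mu) *
        (Polynomial.X - Polynomial.C (p^2)) := by
    rw [Matrix.charpoly, hM, Matrix.det_fin_three]
    rw [Matrix.charmatrix_apply_eq, Matrix.charmatrix_apply_eq, Matrix.charmatrix_apply_eq,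
      Matrix.charmatrix_apply_ne _ _ _ h01, Matrix.charmatrix_apply_ne _ _ _ h02,
      Matrix.charmatrix_apply_ne _ _ _ h10, Matrix.charmatrix_apply_ne _ _ _ h12,
      Matrix.charmatrix_apply_ne _ _ _ h20, Matrix.charmatrix_apply_ne _ _ _ h21]
    simp only [Matrix.of_apply, Matrix.cons_val', Matrix.cons_val_zero, Matrix.cons_val_one,
      Matrix.head_cons, Matrix.empty_val', Matrix.cons_val_fin_one, Matrix.cons_val_two,
      Matrix.tail_cons, Matrix.head_fin_const]
    have expand : (Polynomial.X - Polynomial.C lam) * (Polynomial.X - Polynomial.C mu) *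
        (Polynomial.X - Polynomial.C (p^2)) =
        Polynomial.X^3 - Polynomial.C (lam + mu + p^2) * Polynomial.X^2 +
        Polynomial.C (lam*mu + (lam + mu)*p^2) * Polynomial.X -
        Polynomial.C (lam*mu*p^2) := by
      simp only [Polynomial.C_add, Polynomial.C_mul]
      ring
    rw [expand, hsum, hprod]
    simp only [Polynomial.C_add, Polynomial.C_mul, Polynomial.C_neg, Polynomial.C_pow,
      Polynomial.C_sub, Polynomial.C_0, map_ofNat, Polynomial.C_1]
    ring
  have hmap : (Cword p ![0, 1]).charpoly.map (algebraMap ℝ ℂ) =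
      (Polynomial.X - Polynomial.C ((lam:ℝ) : ℂ)) * (Polynomial.X - Polynomial.C ((mu:ℝ) : ℂ)) *
        (Polynomial.X - Polynomial.C (((p:ℝ):ℂ)^2)) := by
    rw [hfac, Polynomial.map_mul, Polynomial.map_mul, Polynomial.map_sub, Polynomial.map_sub,
      Polynomial.map_sub, Polynomial.map_X, Polynomial.map_C, Polynomial.map_C,
      Polynomial.map_C]
    norm_cast
  refine ⟨1, ![0, 1], lam, hlampos, ?_, ?_⟩
  · rw [hmap]
    have h1 : (Polynomial.X - Polynomial.C ((lam:ℝ) : ℂ)) *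
        (Polynomial.X - Polynomial.C ((mu:ℝ) : ℂ)) ≠ 0 :=
      mul_ne_zero (Polynomial.X_sub_C_ne_zero _) (Polynomial.X_sub_C_ne_zero _)
    have h2 : (Polynomial.X - Polynomial.C ((lam:ℝ) : ℂ)) *
        (Polynomial.X - Polynomial.C ((mu:ℝ) : ℂ)) *
        (Polynomial.X - Polynomial.C (((p:ℝ):ℂ)^2)) ≠ 0 :=
      mul_ne_zero h1 (Polynomial.X_sub_C_ne_zero _)
    rw [Polynomial.rootMultiplicity_mul h2, Polynomial.rootMultiplicity_mul h1,
      Polynomial.rootMultiplicity_X_sub_C, Polynomial.rootMultiplicity_X_sub_C,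
      Polynomial.rootMultiplicity_X_sub_C]
    have e2 : ((lam:ℝ) : ℂ) ≠ ((mu:ℝ) : ℂ) := by
      simp only [ne_eq, Complex.ofReal_inj]; linarith
    have e3 : ((lam:ℝ) : ℂ) ≠ ((p:ℝ):ℂ)^2 := by
      rw [← Complex.ofReal_pow]
      simp only [ne_eq, Complex.ofReal_inj]; linarith
    simp [e2, e3]
  · intro μ hroot hne
    rw [hmap] at hroot
    simp only [Polynomial.IsRoot, Polynomial.eval_mul, Polynomial.eval_sub,
      Polynomial.eval_X, Polynomial.eval_C, mul_eq_zero, sub_eq_zero] at hroot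
    rcases hroot with hh | h
    · rcases hh with h | h
      · exact absurd h hne
      · rw [h, Complex.norm_real, Real.norm_eq_abs, abs_of_pos hmupos]; exact hmul
    · rw [h, ← Complex.ofReal_pow, Complex.norm_real, Real.norm_eq_abs,
        abs_of_pos (by positivity : (0:ℝ) < p^2)]
      exact hp2l
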